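/- Σ_{n=1}^∞ (-1)^{n-1} / ((2n−1)^2(2n+1)^2(2n+3)^2(2n+5)^2) = (2!)^3/((4!)^3·1!) · π − 7/4050, i.e. equals π/1728 − 7/4050. -/

import Mathlib

open Real Filter Finset

noncomputable def Haux (x : ℝ) : ℝ :=
  -43/13824/(2*x+1) + 1/2304/(2*x+1)^2 + 1/864/(2*x+3) + 1/288/(2*x+3)^2
    + 11/13824/(2*x+5) + 1/2304/(2*x+5)^2

lemma Haux_tendsto : Tendsto (fun n : ℕ => Haux n) atTop (nhds 0) := by
  have hb : Tendsto (fun n : ℕ => (n : ℝ)) atTop atTop := tendsto_natCast_atTop_atTop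
  have hlin : ∀ c : ℝ, Tendsto (fun n : ℕ => 2*(n:ℝ)+c) atTop atTop := fun c =>
    tendsto_atTop_add_const_right _ c (hb.const_mul_atTop two_pos)
  have hsq : ∀ c : ℝ, Tendsto (fun n : ℕ => (2*(n:ℝ)+c)^2) atTop atTop := fun c => by
    simpa [pow_two] using (hlin c).atTop_mul_atTop₀ (hlin c)
  have h1 := tendsto_const_nhds.div_atTop (hlin 1) (f := fun _ : ℕ => (-43/13824 : ℝ))
  have h2 := tendsto_const_nhds.div_atTop (hsq 1) (f := fun _ : ℕ => (1/2304 : ℝ))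
  have h3 := tendsto_const_nhds.div_atTop (hlin 3) (f := fun _ : ℕ => (1/864 : ℝ))
  have h4 := tendsto_const_nhds.div_atTop (hsq 3) (f := fun _ : ℕ => (1/288 : ℝ))
  have h5 := tendsto_const_nhds.div_atTop (hlin 5) (f := fun _ : ℕ => (11/13824 : ℝ))
  have h6 := tendsto_const_nhds.div_atTop (hsq 5) (f := fun _ : ℕ => (1/2304 : ℝ))
  have := ((((h1.add h2).add h3).add h4).add h5).add h6
  simpa [Haux] using this

theorem sum_alt_four_odd_squares :
    ∑' n : ℕ, (-1 : ℝ) ^ n /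
        ((2 * (n : ℝ) + 1) ^ 2 * (2 * (n : ℝ) + 3) ^ 2 * (2 * (n : ℝ) + 5) ^ 2 *
          (2 * (n : ℝ) + 7) ^ 2) =
      ((Nat.factorial 2 : ℝ) ^ 3 / ((Nat.factorial 4 : ℝ) ^ 3 * (Nat.factorial 1 : ℝ))) * π -
        7 / 4050 := by
  set f : ℕ → ℝ := fun n => (-1 : ℝ) ^ n /
      ((2 * (n : ℝ) + 1) ^ 2 * (2 * (n : ℝ) + 3) ^ 2 * (2 * (n : ℝ) + 5) ^ 2 *
        (2 * (n : ℝ) + 7) ^ 2) with hf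
  set G : ℕ → ℝ := fun n => (-1 : ℝ) ^ n * Haux n with hG
  -- key pointwise identity
  have key : ∀ n : ℕ, f n = (1/432) * ((-1:ℝ)^n / (2*(n:ℝ)+1)) + (G n - G (n+1)) := by
    intro n
    have h1 : (2*(n:ℝ)+1) ≠ 0 := by positivity
    have h3 : (2*(n:ℝ)+3) ≠ 0 := by positivity
    have h5 : (2*(n:ℝ)+5) ≠ 0 := by positivity
    have h7 : (2*(n:ℝ)+7) ≠ 0 := by positivity
    simp only [hf, hG, Haux, pow_succ]
    push_cast
    field_simp
    ring
  -- summability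
  have hsum : Summable f := by
    have hS : Summable (fun n : ℕ => 1 / ((n:ℝ)+1)^2) := by
      have := (summable_one_div_nat_pow (p := 2)).mpr one_lt_two
      have := (summable_nat_add_iff 1).mpr this
      simpa using this
    apply Summable.of_norm
    apply hS.of_nonneg_of_le (fun n => norm_nonneg _)
    intro n
    have h1 : (0:ℝ) < (2*(n:ℝ)+1)^2 := by positivity
    have h3 : (0:ℝ) < (2*(n:ℝ)+3)^2 := by positivity
    have h5 : (0:ℝ) < (2*(n:ℝ)+5)^2 := by positivity
    have h7 : (0:ℝ) < (2*(n:ℝ)+7)^2 := by positivity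
    have : ‖f n‖ = 1 / ((2*(n:ℝ)+1)^2 * (2*(n:ℝ)+3)^2 * (2*(n:ℝ)+5)^2 * (2*(n:ℝ)+7)^2) := by
      simp [hf, abs_div, abs_of_pos, h1, h3, h5, h7, abs_of_pos (by positivity :
        (0:ℝ) < (2*(n:ℝ)+1)^2 * (2*(n:ℝ)+3)^2 * (2*(n:ℝ)+5)^2 * (2*(n:ℝ)+7)^2)]
    rw [this]
    have e1 : ((n:ℝ)+1)^2 ≤ (2*(n:ℝ)+1)^2 := by nlinarith [sq_nonneg (n:ℝ), Nat.cast_nonneg (α := ℝ) n]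
    have e2 : (2*(n:ℝ)+1)^2 ≤ (2*(n:ℝ)+1)^2 * (2*(n:ℝ)+3)^2 :=
      le_mul_of_one_le_right h1.le (by nlinarith [sq_nonneg (n:ℝ), Nat.cast_nonneg (α := ℝ) n])
    have e3 : (2*(n:ℝ)+1)^2 * (2*(n:ℝ)+3)^2 ≤ (2*(n:ℝ)+1)^2 * (2*(n:ℝ)+3)^2 * (2*(n:ℝ)+5)^2 :=
      le_mul_of_one_le_right (by positivity) (by nlinarith [sq_nonneg (n:ℝ), Nat.cast_nonneg (α := ℝ) n])
    have e4 : (2*(n:ℝ)+1)^2 * (2*(n:ℝ)+3)^2 * (2*(n:ℝ)+5)^2 ≤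
        (2*(n:ℝ)+1)^2 * (2*(n:ℝ)+3)^2 * (2*(n:ℝ)+5)^2 * (2*(n:ℝ)+7)^2 :=
      le_mul_of_one_le_right (by positivity) (by nlinarith [sq_nonneg (n:ℝ), Nat.cast_nonneg (α := ℝ) n])
    exact div_le_div_of_nonneg_left one_pos.le (by positivity)
      (e1.trans (e2.trans (e3.trans e4)))
  -- partial sums
  have hps : ∀ N : ℕ, ∑ i ∈ range N, f i =
      (1/432) * (∑ i ∈ range N, (-1:ℝ)^i / (2*(i:ℝ)+1)) + (G 0 - G N) := by
    intro N
    rw [← Finset.sum_range_sub' G N, Finset.mul_sum, ← Finset.sum_add_distrib]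
    exact Finset.sum_congr rfl fun i _ => key i
  -- limits
  have hGlim : Tendsto G atTop (nhds 0) := by
    refine squeeze_zero_norm (a := fun n : ℕ => ‖Haux n‖) (fun n => ?_) ?_
    · simp [hG, abs_mul]
    · simpa using Haux_tendsto.norm
  have hlim : Tendsto (fun N => ∑ i ∈ range N, f i) atTop
      (nhds ((1/432) * (π/4) + (G 0 - 0))) := by
    simp only [hps]
    exact ((tendsto_const_nhds.mul Real.tendsto_sum_pi_div_four).add
      (tendsto_const_nhds.sub hGlim))
  have := tendsto_nhds_unique hsum.hasSum.tendsto_sum_nat hlim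
  rw [this]
  have hG0 : G 0 = -7/4050 := by
    norm_num [hG, Haux]
  rw [hG0]
  norm_num [Nat.factorial]
  ring
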